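/- Let n ≥ 2 be a natural number and let λ > 0, λ_e > 0 be real numbers. Let v : ℕ → ℝ satisfy, for every j with 1 ≤ j ≤ n, the recursion v(j) = (λ_e + j(n−j)·(λ/(n−1) + λ/n)·v(j+1)) / (2j·λ/n + j(n−j)·(λ/(n−1) + λ/n)). Then v(1) ≤ (λ_e/λ)·(2(n−1)·H_{n−1})/(2n−1) + λ_e/(2λ), where H_m = ∑_{k=1}^{m} 1/k denotes the m-th harmonic number. -/

import Mathlib

/-- Upper bound on the average version age of a single node in a fully connected
gossip network with contact-mobility scaling `f(n) = n`. -/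
theorem stmt_2 (n : ℕ) (hn : 2 ≤ n) (lam lamE : ℝ) (hlam : 0 < lam) (hlamE : 0 < lamE)
    (v : ℕ → ℝ)
    (hv : ∀ j : ℕ, 1 ≤ j → j ≤ n →
      v j = (lamE + (j : ℝ) * ((n : ℝ) - j) * (lam / ((n : ℝ) - 1) + lam / n) * v (j + 1)) /
        (2 * (j : ℝ) * lam / n + (j : ℝ) * ((n : ℝ) - j) * (lam / ((n : ℝ) - 1) + lam / n))) :
    v 1 ≤ (lamE / lam) * (2 * ((n : ℝ) - 1) * (∑ k ∈ Finset.Icc 1 (n - 1), (1 : ℝ) / k))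
        / (2 * (n : ℝ) - 1) + lamE / (2 * lam) := by
  have hnR : (2:ℝ) ≤ (n:ℝ) := by exact_mod_cast hn
  have hN : (0:ℝ) < (n:ℝ) := by linarith
  have hN1 : (0:ℝ) < (n:ℝ) - 1 := by linarith
  have h2n1 : (0:ℝ) < 2*(n:ℝ) - 1 := by linarith
  set C : ℝ := lamE * n * ((n:ℝ)-1) / (lam * (2*(n:ℝ)-1)) with hC
  have key : ∀ m j : ℕ, 1 ≤ j → j + m = n →
      0 ≤ v j ∧ v j ≤ lamE/(2*lam) +
        C * ∑ k ∈ Finset.Icc j (n-1), 1/((k:ℝ)*((n:ℝ)-k)) := by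
    intro m
    induction m with
    | zero =>
      intro j hj hjn
      have hjn' : j = n := by omega
      subst hjn'
      have hvn := hv j hj le_rfl
      simp only [sub_self, mul_zero, zero_mul, add_zero] at hvn
      have hj0 : ((j:ℝ)) ≠ 0 := by positivity
      have hvn' : v j = lamE / (2*lam) := by
        rw [hvn]; field_simp
      have hempty : Finset.Icc j (j-1) = ∅ := by
        apply Finset.Icc_eq_empty; omega
      rw [hempty, Finset.sum_empty, mul_zero, add_zero, hvn']
      constructor
      · positivity
      · exact le_refl _
    | succ m ih =>
      intro j hj hjn
      have hjlt : j < n := by omega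
      obtain ⟨ih0, ih1⟩ := ih (j+1) (by omega) (by omega)
      have hjR : (1:ℝ) ≤ (j:ℝ) := by exact_mod_cast hj
      have hjnR : (j:ℝ) < (n:ℝ) := by exact_mod_cast hjlt
      have hcpos : 0 < lam / ((n:ℝ)-1) + lam / n := by positivity
      set a : ℝ := (j:ℝ) * ((n:ℝ) - j) * (lam / ((n:ℝ)-1) + lam / n) with ha
      have hapos : 0 < a := by
        apply mul_pos (mul_pos (by linarith) (by linarith)) hcpos
      set b : ℝ := 2 * (j:ℝ) * lam / n with hb
      have hbpos : 0 < b := by positivity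
      have hvj := hv j hj (le_of_lt hjlt)
      rw [← ha, ← hb] at hvj
      have hDpos : 0 < b + a := by linarith
      have h0 : 0 ≤ v j := by
        rw [hvj]
        apply div_nonneg (by nlinarith) (le_of_lt hDpos)
      refine ⟨h0, ?_⟩
      have hstep : v j ≤ lamE / a + v (j+1) := by
        rw [hvj]
        have h1 : (lamE + a * v (j+1)) / (b + a) ≤ (lamE + a * v (j+1)) / a := by
          apply div_le_div_of_nonneg_left (by nlinarith) hapos (by linarith)
        have h2 : (lamE + a * v (j+1)) / a = lamE / a + v (j+1) := by
          field_simp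
        linarith
      have hEa : lamE / a = C * (1/((j:ℝ)*((n:ℝ)-j))) := by
        rw [ha, hC]
        have hnj : (n:ℝ) - j ≠ 0 := by linarith
        have hj0' : (j:ℝ) ≠ 0 := by linarith
        have h2n1' : 2*(n:ℝ)-1 ≠ 0 := by linarith
        field_simp
        ring_nf
        have h3 : (-1 + (n:ℝ)*2) ≠ 0 := by linarith
        field_simp
        ring
      have hsplit : ∑ k ∈ Finset.Icc j (n-1), 1/((k:ℝ)*((n:ℝ)-k))
          = 1/((j:ℝ)*((n:ℝ)-j)) + ∑ k ∈ Finset.Icc (j+1) (n-1), 1/((k:ℝ)*((n:ℝ)-k)) := by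
        rw [Finset.Icc_eq_cons_Ioc (by omega : j ≤ n-1), Finset.sum_cons,
          ← Finset.Icc_add_one_left_eq_Ioc]
      rw [hsplit, mul_add]
      calc v j ≤ lamE / a + v (j+1) := hstep
        _ ≤ lamE / a + (lamE/(2*lam) + C * ∑ k ∈ Finset.Icc (j+1) (n-1), 1/((k:ℝ)*((n:ℝ)-k))) := by linarith
        _ = lamE/(2*lam) + (C * (1/((j:ℝ)*((n:ℝ)-j))) + C * ∑ k ∈ Finset.Icc (j+1) (n-1), 1/((k:ℝ)*((n:ℝ)-k))) := by
            rw [hEa]; ring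
  obtain ⟨-, hmain⟩ := key (n-1) 1 le_rfl (by omega)
  have hS : ∑ k ∈ Finset.Icc 1 (n-1), 1/((k:ℝ)*((n:ℝ)-k))
      = (2/(n:ℝ)) * ∑ k ∈ Finset.Icc 1 (n-1), (1:ℝ)/k := by
    have h1 : ∀ k ∈ Finset.Icc 1 (n-1),
        1/((k:ℝ)*((n:ℝ)-k)) = (1/(n:ℝ)) * ((1:ℝ)/(k:ℝ) + 1/((n:ℝ)-k)) := by
      intro k hk
      simp only [Finset.mem_Icc] at hk
      have hk0 : (0:ℝ) < (k:ℝ) := by exact_mod_cast hk.1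
      have hkn : (k:ℝ) < (n:ℝ) := by exact_mod_cast (by omega : k < n)
      have hne1 : (k:ℝ) ≠ 0 := ne_of_gt hk0
      have hne2 : (n:ℝ) - k ≠ 0 := by linarith
      field_simp
      ring
    rw [Finset.sum_congr rfl h1, ← Finset.mul_sum, Finset.sum_add_distrib]
    have h2 : ∑ k ∈ Finset.Icc 1 (n-1), 1/((n:ℝ)-(k:ℝ))
        = ∑ k ∈ Finset.Icc 1 (n-1), (1:ℝ)/(k:ℝ) := by
      apply Finset.sum_nbij' (fun k => n - k) (fun k => n - k)
      · intro k hk; simp only [Finset.mem_Icc] at hk ⊢; omega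
      · intro k hk; simp only [Finset.mem_Icc] at hk ⊢; omega
      · intro k hk; simp only [Finset.mem_Icc] at hk; omega
      · intro k hk; simp only [Finset.mem_Icc] at hk; omega
      · intro k hk
        simp only [Finset.mem_Icc] at hk
        have : ((n - k : ℕ) : ℝ) = (n:ℝ) - (k:ℝ) := by
          rw [Nat.cast_sub (by omega)]
        rw [this]
    rw [h2]
    field_simp
    ring
  rw [hS] at hmain
  have hfinal : C * ((2/(n:ℝ)) * ∑ k ∈ Finset.Icc 1 (n-1), (1:ℝ)/k)
      = (lamE / lam) * (2 * ((n:ℝ) - 1) * (∑ k ∈ Finset.Icc 1 (n-1), (1:ℝ)/k)) / (2*(n:ℝ)-1) := by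
    rw [hC]
    field_simp
  linarith [hmain, hfinal.ge, hfinal.le]
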